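/- Let V be a real vector space, Δ ⊆ V a finite linearly independent subset, λ ∈ V, and X ⊆ λ − ℤ₊Δ a subset with λ ∈ X. Let J ⊆ Δ, and let φ : V → ℝ be a linear functional with φ(α) = 0 for all α ∈ J and φ(α) > 0 for all α ∈ Δ ∖ J. Then the maximizer set X(φ) equals X ∩ (λ − ℤ₊J). -/

import Mathlib

open Finsupp

/-- `R₊ := R ∩ [0,∞)`. -/
def Rplus (R : Set ℝ) : Set ℝ := R ∩ Set.Ici 0

/-- `ℓ(f) := Σ_v f(v)`. -/
noncomputable def ell {V : Type*} [AddCommGroup V] [Module ℝ V] (f : V →₀ ℝ) : ℝ :=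
  f.sum fun _ r => r

/-- `ℓ⃗(f) := Σ_v f(v) • v`. -/
noncomputable def vell {V : Type*} [AddCommGroup V] [Module ℝ V] (f : V →₀ ℝ) : V :=
  f.sum fun v r => r • v

/-- `f ∈ Fin(X,R)`: finitely supported, support in `X`, values in `R ∪ {0}`. -/
def IsFinSupp {V : Type*} [AddCommGroup V] [Module ℝ V] (X : Set V) (R : Set ℝ)
    (f : V →₀ ℝ) : Prop :=
  ↑f.support ⊆ X ∧ ∀ v, f v ∈ R ∪ {0}

/-- `Y` is a weak `R`-face of `X`. -/
def IsWeakFace {V : Type*} [AddCommGroup V] [Module ℝ V] (X Y : Set V) (R : Set ℝ) : Prop :=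
  ∀ f g : V →₀ ℝ, IsFinSupp X (Rplus R) f → IsFinSupp Y (Rplus R) g →
    ell f = ell g → 0 < ell g → vell f = vell g → ↑f.support ⊆ Y

/-- `Y` is a positive weak `R`-face of `X`. -/
def IsPosWeakFace {V : Type*} [AddCommGroup V] [Module ℝ V] (X Y : Set V) (R : Set ℝ) : Prop :=
  ∀ f g : V →₀ ℝ, IsFinSupp X (Rplus R) f → IsFinSupp Y (Rplus R) g →
    vell f = vell g → ell g ≤ ell f ∧ (ell g = ell f ↔ ↑f.support ⊆ Y)

/-- `Y` is `(R',R)`-closed in `X`. -/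
def IsRClosed {V : Type*} [AddCommGroup V] [Module ℝ V] (X Y : Set V) (R' R : Set ℝ) : Prop :=
  ∀ f g : V →₀ ℝ, IsFinSupp X R f → IsFinSupp Y R g →
    ell f = ell g → ell f ∈ R' → ell f ≠ 0 → vell f = vell g → ↑f.support ⊆ Y

/-- The maximizer set `X(φ)`. -/
def maximizer {V : Type*} [AddCommGroup V] [Module ℝ V] (X : Set V) (φ : V →ₗ[ℝ] ℝ) : Set V :=
  {x | x ∈ X ∧ ∀ x' ∈ X, φ x' ≤ φ x}

/-- If `X ⊆ λ − ℤ₊Δ` contains `λ`, `J ⊆ Δ`, and `φ` is a linear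
functional vanishing on `J` and positive on `Δ ∖ J`, then `X(φ) = X ∩ (λ − ℤ₊J)`.
Here `ℤ₊Δ'` is the additive submonoid generated by `Δ'` (nonnegative integer
combinations). -/
theorem statement13 {V : Type*} [AddCommGroup V] [Module ℝ V]
    (Δ : Set V) (hfin : Δ.Finite)
    (hind : LinearIndependent ℝ (fun x : Δ => (x : V)))
    (lam : V) (X : Set V)
    (hX : X ⊆ {x : V | ∃ q ∈ AddSubmonoid.closure Δ, x = lam - q})
    (hlam : lam ∈ X)
    (J : Set V) (hJ : J ⊆ Δ)
    (φ : V →ₗ[ℝ] ℝ) (hJ0 : ∀ α ∈ J, φ α = 0) (hpos : ∀ α ∈ Δ \ J, 0 < φ α) :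
    maximizer X φ = X ∩ {x : V | ∃ q ∈ AddSubmonoid.closure J, x = lam - q} := by
  have key : ∀ q ∈ AddSubmonoid.closure Δ, 0 ≤ φ q ∧ (φ q = 0 → q ∈ AddSubmonoid.closure J) := by
    intro q hq
    induction hq using AddSubmonoid.closure_induction with
    | mem α hα =>
        by_cases h : α ∈ J
        · exact ⟨le_of_eq (hJ0 α h).symm, fun _ => AddSubmonoid.subset_closure h⟩
        · have hp := hpos α ⟨hα, h⟩
          exact ⟨hp.le, fun h0 => absurd h0 hp.ne'⟩
    | zero => exact ⟨le_of_eq (map_zero φ).symm, fun _ => zero_mem _⟩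
    | add a b _ _ ha hb =>
        refine ⟨by rw [map_add]; exact add_nonneg ha.1 hb.1, fun h0 => ?_⟩
        rw [map_add] at h0
        have ha0 : φ a = 0 := le_antisymm (by linarith [hb.1]) ha.1
        have hb0 : φ b = 0 := by linarith
        exact add_mem (ha.2 ha0) (hb.2 hb0)
  have hJker : ∀ q ∈ AddSubmonoid.closure J, φ q = 0 := by
    intro q hq
    refine AddSubmonoid.closure_induction (fun α hα => hJ0 α hα) (map_zero φ)
      (fun a b _ _ ha hb => by rw [map_add, ha, hb, add_zero]) hq
  have hle : ∀ x ∈ X, φ x ≤ φ lam := by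
    intro x hx
    obtain ⟨q, hq, rfl⟩ := hX hx
    have := (key q hq).1
    rw [map_sub]; linarith
  ext x
  constructor
  · rintro ⟨hxX, hmax⟩
    obtain ⟨q, hq, hxq⟩ := hX hxX
    have h1 : φ lam ≤ φ x := hmax lam hlam
    have h2 : φ q = 0 := by
      have : φ x = φ lam - φ q := by rw [hxq, map_sub]
      have := hle x hxX
      have hqn := (key q hq).1
      linarith
    exact ⟨hxX, q, (key q hq).2 h2, hxq⟩
  · rintro ⟨hxX, q, hq, rfl⟩
    refine ⟨hxX, fun x' hx' => ?_⟩
    have : φ (lam - q) = φ lam := by rw [map_sub, hJker q hq, sub_zero]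
    rw [this]
    exact hle x' hx'
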